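/- arXiv:1304.5954 — 4 statements merged into one kernel-verified Lean document; each statement's English description precedes it below -/
import Mathlib

section
/- Let (M, ·, 1) be a monoid and ⋆ a semi-monoidal tensor on M that is strictly associative, and suppose the maps x ↦ x ⋆ 1 and x ↦ 1 ⋆ x are injective. Then x ⋆ 1 = x = 1 ⋆ x for every x ∈ M; in particular the maps x ↦ x ⋆ 1 and x ↦ 1 ⋆ x are bijective (i.e., the unique object is the Saavedra unit, so no monoid with a faithful non-unit object admits a strictly associative semi-monoidal tensor). -/
/-- A strictly associative semi-monoidal tensor on a monoid, whose
translations by the monoid unit are injective, makes the unit a strict unit for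
the tensor; in particular the translations are bijective (Saavedra unit). -/
theorem stmt_1 {M : Type*} [Monoid M] (star : M → M → M)
    (hunit : star 1 1 = 1)
    (hinterchange : ∀ a b c d : M, star (a * c) (b * d) = star a b * star c d)
    (hassoc : ∀ a b c : M, star a (star b c) = star (star a b) c)
    (hR : Function.Injective (fun x : M => star x 1))
    (hL : Function.Injective (fun x : M => star 1 x)) :
    (∀ x : M, star x 1 = x ∧ star 1 x = x) ∧
    Function.Bijective (fun x : M => star x 1) ∧
    Function.Bijective (fun x : M => star 1 x) := by
  have key : ∀ x : M, star x 1 = x ∧ star 1 x = x := by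
    intro x
    constructor
    · apply hR
      show star (star x 1) 1 = star x 1
      rw [← hassoc, hunit]
    · apply hL
      show star 1 (star 1 x) = star 1 x
      rw [hassoc, hunit]
  refine ⟨key, ?_, ?_⟩
  · have : (fun x : M => star x 1) = id := funext fun x => (key x).1
    rw [this]; exact Function.bijective_id
  · have : (fun x : M => star 1 x) = id := funext fun x => (key x).2
    rw [this]; exact Function.bijective_id
end

section
/- Let C be a monoidal category, S an object of C, and d : S ⊗ S ≅ S a self-similar structure. Then the induced associator a ∈ End(S) is natural for the induced tensor ⋆: for all f, g, h ∈ End(S), (f ⋆ (g ⋆ h)) ≫ a = a ≫ ((f ⋆ g) ⋆ h). -/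
open CategoryTheory MonoidalCategory

/-- For a self-similar structure `d : S ⊗ S ≅ S`, the induced
associator `a := d.inv ≫ (𝟙 S ⊗ d.inv) ≫ (α_ S S S).inv ≫ (d.hom ⊗ 𝟙 S) ≫ d.hom`
is natural for the induced tensor `f ⋆ g := d.inv ≫ (f ⊗ g) ≫ d.hom`:
`(f ⋆ (g ⋆ h)) ≫ a = a ≫ ((f ⋆ g) ⋆ h)` for all `f, g, h ∈ End(S)`. -/
theorem stmt_4 {C : Type*} [Category C] [MonoidalCategory C] (S : C)
    (d : S ⊗ S ≅ S)
    (star : (S ⟶ S) → (S ⟶ S) → (S ⟶ S))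
    (hstar : ∀ f g : S ⟶ S, star f g = d.inv ≫ (f ⊗ₘ g) ≫ d.hom)
    (a : S ⟶ S)
    (ha : a = d.inv ≫ (𝟙 S ⊗ₘ d.inv) ≫ (α_ S S S).inv ≫ (d.hom ⊗ₘ 𝟙 S) ≫ d.hom) :
    ∀ f g h : S ⟶ S, star f (star g h) ≫ a = a ≫ star (star f g) h := by
  intro f g h
  simp only [hstar, ha, Category.assoc, Iso.hom_inv_id_assoc]
  rw [tensorHom_comp_tensorHom_assoc, tensorHom_comp_tensorHom_assoc, Category.comp_id, Category.id_comp]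
  simp only [Category.assoc, Iso.hom_inv_id, Category.comp_id]
  rw [← Category.id_comp f, ← tensorHom_comp_tensorHom]
  simp only [Category.assoc, Category.id_comp, associator_inv_naturality_assoc,
    Iso.hom_inv_id_assoc]
  rw [tensorHom_comp_tensorHom_assoc, Category.comp_id]
end

section
/- Let C be a monoidal category, S an object of C, and d : S ⊗ S ≅ S a self-similar structure. Then the induced associator a ∈ End(S) satisfies MacLane's pentagon condition for the induced tensor ⋆: (𝟙_S ⋆ a) ≫ a ≫ (a ⋆ 𝟙_S) = a ≫ a. (Together with functoriality and naturality, this makes (End(S), ⋆, a) a semi-monoidal monoid.) -/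
open CategoryTheory MonoidalCategory

/-- For a self-similar structure `d : S ⊗ S ≅ S`, the induced
associator `a` satisfies MacLane's pentagon condition for the induced tensor:
`(𝟙 S ⋆ a) ≫ a ≫ (a ⋆ 𝟙 S) = a ≫ a`. -/
theorem stmt_5 {C : Type*} [Category C] [MonoidalCategory C] (S : C)
    (d : S ⊗ S ≅ S)
    (star : (S ⟶ S) → (S ⟶ S) → (S ⟶ S))
    (hstar : ∀ f g : S ⟶ S, star f g = d.inv ≫ (f ⊗ₘ g) ≫ d.hom)
    (a : S ⟶ S)
    (ha : a = d.inv ≫ (𝟙 S ⊗ₘ d.inv) ≫ (α_ S S S).inv ≫ (d.hom ⊗ₘ 𝟙 S) ≫ d.hom) :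
    star (𝟙 S) a ≫ a ≫ star a (𝟙 S) = a ≫ a := by
  subst ha
  rw [hstar, hstar]
  simp only [Category.assoc, Iso.hom_inv_id_assoc, Iso.inv_hom_id_assoc,
    MonoidalCategory.tensorHom_def, id_tensorHom, tensorHom_id, MonoidalCategory.whiskerLeft_comp,
    MonoidalCategory.comp_whiskerRight, MonoidalCategory.whiskerLeft_id, MonoidalCategory.id_whiskerRight,
    Category.id_comp, Category.comp_id, whiskerLeft_hom_inv_assoc, hom_inv_whiskerRight_assoc, whiskerLeft_inv_hom_assoc, inv_hom_whiskerRight_assoc]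
  rw [← cancel_epi d.hom, ← cancel_mono d.inv]
  simp only [Iso.hom_inv_id_assoc, Category.assoc, Iso.hom_inv_id, Category.comp_id,
    associator_inv_naturality_middle_assoc, hom_inv_whiskerRight_assoc,
    pentagon_inv_assoc, associator_inv_naturality_right_assoc,
    associator_inv_naturality_left, whisker_exchange_assoc]
  rw [← MonoidalCategory.comp_whiskerRight_assoc, whiskerLeft_hom_inv,
    MonoidalCategory.id_whiskerRight]
  simp only [MonoidalCategory.whiskerLeft_id, Category.id_comp,
    pentagon_inv_assoc, associator_inv_naturality_right_assoc,
    associator_inv_naturality_left, whisker_exchange_assoc, Category.assoc]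
  rw [← associator_inv_naturality_left_assoc, whisker_exchange_assoc]
end

section
/- Let C be a monoidal category, S an object of C, and d : S ⊗ S ≅ S a self-similar structure. Let A, B, E be objects equipped with isomorphisms c_A : A ≅ S, c_B : B ≅ S, c_E : E ≅ S. Then the convolution of the inverse associator (α_{A,B,E}).inv : A ⊗ (B ⊗ E) ⟶ (A ⊗ B) ⊗ E along the composite code isomorphisms c_{A⊗(B⊗E)} and c_{(A⊗B)⊗E} equals the induced associator a; that is, c_{A⊗(B⊗E)}.inv ≫ (α_{A,B,E}).inv ≫ c_{(A⊗B)⊗E}.hom = a. (In particular this convolution is independent of A, B, E.) -/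
open CategoryTheory MonoidalCategory

/-- The convolution of the inverse associator
`(α_ A B E).inv : A ⊗ (B ⊗ E) ⟶ (A ⊗ B) ⊗ E` along the composite code
isomorphisms equals the induced associator `a` (independently of `A,B,E`). -/
theorem stmt_7 {C : Type*} [Category C] [MonoidalCategory C] (S : C)
    (d : S ⊗ S ≅ S)
    (a : S ⟶ S)
    (ha : a = d.inv ≫ (𝟙 S ⊗ₘ d.inv) ≫ (α_ S S S).inv ≫ (d.hom ⊗ₘ 𝟙 S) ≫ d.hom)
    (A B E : C) (cA : A ≅ S) (cB : B ≅ S) (cE : E ≅ S) :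
    ((tensorIso cA ((tensorIso cB cE) ≪≫ d)) ≪≫ d).inv ≫ (α_ A B E).inv ≫
      ((tensorIso ((tensorIso cA cB) ≪≫ d) cE) ≪≫ d).hom = a := by
  subst ha
  simp only [tensorIso, Iso.trans_inv, Iso.trans_hom, tensorIso_inv, tensorIso_hom,
    Category.assoc]
  rw [show (cA.inv ⊗ₘ d.inv ≫ (cB.inv ⊗ₘ cE.inv)) = (𝟙 S ⊗ₘ d.inv) ≫ (cA.inv ⊗ₘ (cB.inv ⊗ₘ cE.inv)) by
    simp [tensorHom_comp_tensorHom, ← id_tensorHom]]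
  rw [show ((cA.hom ⊗ₘ cB.hom) ≫ d.hom ⊗ₘ cE.hom) = ((cA.hom ⊗ₘ cB.hom) ⊗ₘ cE.hom) ≫ (d.hom ⊗ₘ 𝟙 S) by
    rw [tensorHom_comp_tensorHom, Category.comp_id]]
  rw [Category.assoc, associator_inv_naturality_assoc]
  simp [tensorHom_comp_tensorHom_assoc, ← id_tensorHom]
end
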